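/- The map Φ sending a (213,231)-avoiding permutation π of {1,...,n} (n ≥ 1) to the binary word w of length n-1 where w(i) = 1 if π(i) < π(i+1) and w(i) = 0 if π(i) > π(i+1), is a bijection between the set of permutations of {1,...,n} avoiding both 213 and 231 and the set of binary words of length n-1. -/

import Mathlib

def Contains213 {n : ℕ} (π : Equiv.Perm (Fin n)) : Prop :=
  ∃ i j k : Fin n, i < j ∧ j < k ∧ π j < π i ∧ π i < π k

def Contains231 {n : ℕ} (π : Equiv.Perm (Fin n)) : Prop :=
  ∃ i j k : Fin n, i < j ∧ j < k ∧ π k < π i ∧ π i < π j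

def Av213231 {n : ℕ} (π : Equiv.Perm (Fin n)) : Prop :=
  ¬ Contains213 π ∧ ¬ Contains231 π

namespace AscentWord

def acnt (w : ℕ → Bool) : ℕ → ℕ
  | 0 => 0
  | i + 1 => acnt w i + (if w i then 1 else 0)

def bcnt (w : ℕ → Bool) : ℕ → ℕ
  | 0 => 0
  | i + 1 => bcnt w i + (if w i then 0 else 1)

lemma acnt_add_bcnt (w : ℕ → Bool) (i : ℕ) : acnt w i + bcnt w i = i := by
  induction i with
  | zero => rfl
  | succ i ih => simp only [acnt, bcnt]; split <;> omega

lemma acnt_mono (w : ℕ → Bool) {i j : ℕ} (h : i ≤ j) : acnt w i ≤ acnt w j := by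
  induction j with
  | zero => rw [Nat.le_zero.mp h]
  | succ j ih =>
    rcases Nat.lt_succ_iff_lt_or_eq.mp (Nat.lt_succ_of_le h) with h' | h'
    · have := ih (Nat.lt_succ_iff.mp h')
      simp only [acnt]; split <;> omega
    · subst h'; exact le_refl _

lemma bcnt_mono (w : ℕ → Bool) {i j : ℕ} (h : i ≤ j) : bcnt w i ≤ bcnt w j := by
  induction j with
  | zero => rw [Nat.le_zero.mp h]
  | succ j ih =>
    rcases Nat.lt_succ_iff_lt_or_eq.mp (Nat.lt_succ_of_le h) with h' | h'
    · have := ih (Nat.lt_succ_iff.mp h')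
      simp only [bcnt]; split <;> omega
    · subst h'; exact le_refl _

def gfun (n : ℕ) (w : ℕ → Bool) (i : ℕ) : ℕ :=
  if w i then acnt w i else n - bcnt w i

lemma gfun_bounds (n : ℕ) (w : ℕ → Bool) {i : ℕ} (hi : i ≤ n) :
    acnt w i ≤ gfun n w i ∧ gfun n w i ≤ n - bcnt w i := by
  have := acnt_add_bcnt w i
  unfold gfun; split <;> omega

lemma gfun_lt_true (n : ℕ) (w : ℕ → Bool) {i j : ℕ} (hij : i < j) (hj : j ≤ n)
    (hw : w i = true) : gfun n w i < gfun n w j := by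
  have h1 : acnt w (i + 1) ≤ acnt w j := acnt_mono w hij
  have h2 : acnt w (i + 1) = acnt w i + 1 := by simp [acnt, hw]
  have h3 := (gfun_bounds n w hj).1
  have : gfun n w i = acnt w i := by simp [gfun, hw]
  omega

lemma gfun_lt_false (n : ℕ) (w : ℕ → Bool) {i j : ℕ} (hij : i < j) (hj : j ≤ n)
    (hw : w i = false) : gfun n w j < gfun n w i := by
  have h1 : bcnt w (i + 1) ≤ bcnt w j := bcnt_mono w hij
  have h2 : bcnt w (i + 1) = bcnt w i + 1 := by simp [bcnt, hw]
  have h3 := (gfun_bounds n w hj).2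
  have h4 := acnt_add_bcnt w j
  have : gfun n w i = n - bcnt w i := by simp [gfun, hw]
  omega

lemma gfun_out (n : ℕ) (w : ℕ → Bool) {k i : ℕ} (hk : k < i) (hi : i ≤ n) :
    gfun n w k < acnt w i ∨ n - bcnt w i < gfun n w k := by
  cases hwk : w k with
  | true =>
    left
    have h2 : acnt w (k + 1) = acnt w k + 1 := by simp [acnt, hwk]
    have := acnt_mono w hk
    have : gfun n w k = acnt w k := by simp [gfun, hwk]
    have := acnt_mono w (show k + 1 ≤ i from hk)
    omega
  | false =>
    right
    have h2 : bcnt w (k + 1) = bcnt w k + 1 := by simp [bcnt, hwk]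
    have hb := bcnt_mono w (show k + 1 ≤ i from hk)
    have hbi := acnt_add_bcnt w i
    have : gfun n w k = n - bcnt w k := by simp [gfun, hwk]
    omega

lemma exists_acnt (w : ℕ → Bool) {i x : ℕ} (hx : x < acnt w i) :
    ∃ j < i, w j = true ∧ acnt w j = x := by
  induction i with
  | zero => simp [acnt] at hx
  | succ i ih =>
    by_cases h : x < acnt w i
    · obtain ⟨j, hj, hw, ha⟩ := ih h
      exact ⟨j, Nat.lt_succ_of_lt hj, hw, ha⟩
    · have hx' : acnt w (i + 1) = acnt w i + (if w i then 1 else 0) := rfl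
      have hwi : w i = true := by
        by_contra hc
        simp [Bool.not_eq_true] at hc
        simp [hc] at hx'
        omega
      refine ⟨i, Nat.lt_succ_self i, hwi, ?_⟩
      simp [hwi] at hx'
      omega

lemma exists_bcnt (n : ℕ) (w : ℕ → Bool) {i x : ℕ} (hx : n - bcnt w i < x) (hxn : x ≤ n) :
    ∃ j < i, w j = false ∧ n - bcnt w j = x := by
  induction i with
  | zero => simp [bcnt] at hx; omega
  | succ i ih =>
    by_cases h : n - bcnt w i < x
    · obtain ⟨j, hj, hw, ha⟩ := ih h
      exact ⟨j, Nat.lt_succ_of_lt hj, hw, ha⟩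
    · have hx' : bcnt w (i + 1) = bcnt w i + (if w i then 0 else 1) := rfl
      have hwi : w i = false := by
        by_contra hc
        simp [Bool.not_eq_false] at hc
        simp [hc] at hx'
        omega
      refine ⟨i, Nat.lt_succ_self i, hwi, ?_⟩
      simp [hwi] at hx'
      omega


section Construct

variable (n : ℕ) (w : ℕ → Bool)

lemma gfun_le (i : Fin (n + 1)) : gfun n w i.val < n + 1 := by
  have h1 := (gfun_bounds n w (Nat.lt_succ_iff.mp i.isLt)).2
  omega

def F : Fin (n + 1) → Fin (n + 1) := fun i => ⟨gfun n w i.val, gfun_le n w i⟩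

lemma F_injective : Function.Injective (F n w) := by
  intro i j hij
  by_contra hne
  have hne' : i.val ≠ j.val := fun h => hne (Fin.ext h)
  have hval : gfun n w i.val = gfun n w j.val := congrArg Fin.val hij
  rcases Nat.lt_or_ge i.val j.val with h | h
  · have hj : j.val ≤ n := Nat.lt_succ_iff.mp j.isLt
    cases hwi : w i.val with
    | true => exact absurd hval (Nat.ne_of_lt (gfun_lt_true n w h hj hwi))
    | false => exact absurd hval.symm (Nat.ne_of_lt (gfun_lt_false n w h hj hwi))
  · have h' : j.val < i.val := lt_of_le_of_ne h (Ne.symm hne')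
    have hi : i.val ≤ n := Nat.lt_succ_iff.mp i.isLt
    cases hwj : w j.val with
    | true => exact absurd hval.symm (Nat.ne_of_lt (gfun_lt_true n w h' hi hwj))
    | false => exact absurd hval (Nat.ne_of_lt (gfun_lt_false n w h' hi hwj))

noncomputable def P : Equiv.Perm (Fin (n + 1)) :=
  Equiv.ofBijective (F n w) (Finite.injective_iff_bijective.mp (F_injective n w))

lemma P_apply (i : Fin (n + 1)) : P n w i = ⟨gfun n w i.val, gfun_le n w i⟩ := rfl

lemma P_avoids : Av213231 (P n w) := by
  constructor
  · rintro ⟨i, j, k, hij, hjk, h1, h2⟩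
    rw [Fin.lt_def] at hij hjk
    have h1' : gfun n w j.val < gfun n w i.val := h1
    have h2' : gfun n w i.val < gfun n w k.val := h2
    have hj : j.val ≤ n := Nat.lt_succ_iff.mp j.isLt
    have hk : k.val ≤ n := Nat.lt_succ_iff.mp k.isLt
    cases hwi : w i.val with
    | true => exact absurd (gfun_lt_true n w hij hj hwi) (by omega)
    | false => exact absurd (gfun_lt_false n w (hij.trans hjk) hk hwi) (by omega)
  · rintro ⟨i, j, k, hij, hjk, h1, h2⟩
    rw [Fin.lt_def] at hij hjk
    have h1' : gfun n w k.val < gfun n w i.val := h1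
    have h2' : gfun n w i.val < gfun n w j.val := h2
    have hj : j.val ≤ n := Nat.lt_succ_iff.mp j.isLt
    have hk : k.val ≤ n := Nat.lt_succ_iff.mp k.isLt
    cases hwi : w i.val with
    | true => exact absurd (gfun_lt_true n w (hij.trans hjk) hk hwi) (by omega)
    | false => exact absurd (gfun_lt_false n w hij hj hwi) (by omega)

lemma P_word (i : Fin n) :
    decide ((P n w) i.castSucc < (P n w) i.succ) = w i.val := by
  rw [P_apply, P_apply]
  have hile : i.val + 1 ≤ n := i.isLt
  simp only [Fin.lt_def, Fin.coe_castSucc, Fin.val_succ, Nat.succ_eq_add_one]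
  cases hwi : w i.val with
  | true =>
    have := gfun_lt_true n w (by omega : i.val < i.val + 1) hile hwi
    simpa using this
  | false =>
    have := gfun_lt_false n w (by omega : i.val < i.val + 1) hile hwi
    simpa using (by omega : ¬ gfun n w i.val < gfun n w (i.val + 1))

end Construct

section Unique

variable {n : ℕ}

lemma lt_of_ascent (π : Equiv.Perm (Fin (n + 1))) (hav : Av213231 π) (i : Fin n)
    (k : Fin (n + 1)) (hk : i.castSucc < k) (h : π i.castSucc < π i.succ) :
    π i.castSucc < π k := by
  rcases eq_or_lt_of_le (Fin.castSucc_lt_iff_succ_le.mp hk) with he | hl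
  · rw [← he]; exact h
  · by_contra hc
    push_neg at hc
    have hne : π k ≠ π i.castSucc := by
      intro e
      have := π.injective e
      exact absurd this (Fin.ne_of_gt hk)
    have hlt : π k < π i.castSucc := lt_of_le_of_ne hc hne
    exact hav.2 ⟨i.castSucc, i.succ, k, Fin.castSucc_lt_succ, hl, hlt, h⟩

lemma lt_of_descent (π : Equiv.Perm (Fin (n + 1))) (hav : Av213231 π) (i : Fin n)
    (k : Fin (n + 1)) (hk : i.castSucc < k) (h : π i.succ < π i.castSucc) :
    π k < π i.castSucc := by
  rcases eq_or_lt_of_le (Fin.castSucc_lt_iff_succ_le.mp hk) with he | hl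
  · rw [← he]; exact h
  · by_contra hc
    push_neg at hc
    have hne : π i.castSucc ≠ π k := by
      intro e
      have := π.injective e
      exact absurd this (Fin.ne_of_lt hk)
    have hlt : π i.castSucc < π k := lt_of_le_of_ne hc hne
    exact hav.1 ⟨i.castSucc, i.succ, k, Fin.castSucc_lt_succ, hl, h, hlt⟩

lemma unique_val (π : Equiv.Perm (Fin (n + 1))) (hav : Av213231 π) (w : ℕ → Bool)
    (hw : ∀ (m : ℕ) (hm : m < n),
      (w m = true ↔ π (Fin.castSucc ⟨m, hm⟩) < π (Fin.succ ⟨m, hm⟩))) :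
    ∀ i : Fin (n + 1), (π i : ℕ) = gfun n w i.val := by
  suffices H : ∀ m : ℕ, ∀ i : Fin (n + 1), i.val = m → (π i : ℕ) = gfun n w i.val by
    intro i; exact H i.val i rfl
  intro m
  induction m using Nat.strong_induction_on with
  | _ m IH =>
  intro i him
  subst him
  have IH' : ∀ j : Fin (n + 1), j.val < i.val → (π j : ℕ) = gfun n w j.val :=
    fun j hj => IH j.val hj j rfl
  have hin : i.val ≤ n := Nat.lt_succ_iff.mp i.isLt
  have hAle : acnt w i.val ≤ (π i : ℕ) := by
    by_contra hc
    push_neg at hc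
    obtain ⟨j, hj, hwj, haj⟩ := exists_acnt w hc
    have hjn : j < n + 1 := by omega
    have hg : (π ⟨j, hjn⟩ : ℕ) = gfun n w j := IH' ⟨j, hjn⟩ hj
    have heq : (π ⟨j, hjn⟩ : ℕ) = (π i : ℕ) := by rw [hg]; simp [gfun, hwj, haj]
    have hji : (⟨j, hjn⟩ : Fin (n + 1)) = i := π.injective (Fin.ext heq)
    have : j = i.val := congrArg Fin.val hji
    omega
  have hBge : (π i : ℕ) ≤ n - bcnt w i.val := by
    by_contra hc
    push_neg at hc
    have hπn : (π i : ℕ) ≤ n := Nat.lt_succ_iff.mp (π i).isLt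
    obtain ⟨j, hj, hwj, haj⟩ := exists_bcnt n w hc hπn
    have hjn : j < n + 1 := by omega
    have hg : (π ⟨j, hjn⟩ : ℕ) = gfun n w j := IH' ⟨j, hjn⟩ hj
    have heq : (π ⟨j, hjn⟩ : ℕ) = (π i : ℕ) := by rw [hg]; simp [gfun, hwj, haj]
    have hji : (⟨j, hjn⟩ : Fin (n + 1)) = i := π.injective (Fin.ext heq)
    have : j = i.val := congrArg Fin.val hji
    omega
  rcases Nat.lt_or_ge i.val n with hlt | hge
  · set iF : Fin n := ⟨i.val, hlt⟩ with hiF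
    have hics : iF.castSucc = i := Fin.ext rfl
    cases hwi : w i.val with
    | true =>
      have hasc : π iF.castSucc < π iF.succ := (hw i.val hlt).mp hwi
      have hAn : acnt w i.val < n + 1 := by
        have := acnt_add_bcnt w i.val; omega
      set y : Fin (n + 1) := ⟨acnt w i.val, hAn⟩ with hy
      set k := π.symm y with hk
      have hky : (π k : ℕ) = acnt w i.val := by rw [hk, π.apply_symm_apply]
      have hkge : i.val ≤ k.val := by
        by_contra hc
        push_neg at hc
        have hg := IH' k hc
        have hout := gfun_out n w hc hin
        omega
      rcases eq_or_lt_of_le hkge with he | hl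
      · have hik : (π i : ℕ) = acnt w i.val := by
          rw [congrArg π (Fin.ext he : i = k)]; exact hky
        rw [hik]; simp [gfun, hwi]
      · have hck : iF.castSucc < k := by
          rw [Fin.lt_def]; exact hl
        have hlt2 : π iF.castSucc < π k := lt_of_ascent π hav iF k hck hasc
        rw [hics] at hlt2
        have : (π i : ℕ) < (π k : ℕ) := hlt2
        omega
    | false =>
      have hdesc : π iF.succ < π iF.castSucc := by
        have h1 : ¬ π iF.castSucc < π iF.succ := fun hc => by
          simp [(hw i.val hlt).mpr hc] at hwi
        have hne : π iF.succ ≠ π iF.castSucc := by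
          intro e
          have he2 := congrArg Fin.val (π.injective e)
          simp [Fin.val_succ] at he2
        exact lt_of_le_of_ne (le_of_not_gt h1) hne
      have hBn : n - bcnt w i.val < n + 1 := by omega
      set y : Fin (n + 1) := ⟨n - bcnt w i.val, hBn⟩ with hy
      set k := π.symm y with hk
      have hky : (π k : ℕ) = n - bcnt w i.val := by rw [hk, π.apply_symm_apply]
      have hkge : i.val ≤ k.val := by
        by_contra hc
        push_neg at hc
        have hg := IH' k hc
        have hout := gfun_out n w hc hin
        omega
      rcases eq_or_lt_of_le hkge with he | hl
      · have hik : (π i : ℕ) = n - bcnt w i.val := by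
          rw [congrArg π (Fin.ext he : i = k)]; exact hky
        rw [hik]; simp [gfun, hwi]
      · have hck : iF.castSucc < k := by
          rw [Fin.lt_def]; exact hl
        have hlt2 : π k < π iF.castSucc := lt_of_descent π hav iF k hck hdesc
        rw [hics] at hlt2
        have : (π k : ℕ) < (π i : ℕ) := hlt2
        omega
  · have hieq : i.val = n := le_antisymm hin hge
    have habn := acnt_add_bcnt w i.val
    unfold gfun
    split <;> omega

end Unique

end AscentWord

/-- The map sending a (213,231)-avoiding permutation of `{1,…,n+1}` to its
ascent/descent word (`true` at `i` iff `π i < π (i+1)`) is a bijection onto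
the binary words of length `n`. -/
theorem ascent_word_bijective (n : ℕ) :
    Function.Bijective (fun π : {π : Equiv.Perm (Fin (n + 1)) // Av213231 π} =>
      fun i : Fin n => decide (π.1 i.castSucc < π.1 i.succ)) := by
  constructor
  · rintro ⟨π, hπ⟩ ⟨σ, hσ⟩ h
    simp only at h
    have hfun : ∀ i : Fin n,
        decide (π i.castSucc < π i.succ) = decide (σ i.castSucc < σ i.succ) :=
      fun i => congrFun h i
    set w : ℕ → Bool := fun m =>
      if hm : m < n then decide (π (Fin.castSucc ⟨m, hm⟩) < π (Fin.succ ⟨m, hm⟩))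
      else false with hwdef
    have hwπ : ∀ (m : ℕ) (hm : m < n),
        (w m = true ↔ π (Fin.castSucc ⟨m, hm⟩) < π (Fin.succ ⟨m, hm⟩)) := by
      intro m hm; simp [hwdef, hm]
    have hwσ : ∀ (m : ℕ) (hm : m < n),
        (w m = true ↔ σ (Fin.castSucc ⟨m, hm⟩) < σ (Fin.succ ⟨m, hm⟩)) := by
      intro m hm
      simp only [hwdef, dif_pos hm]
      rw [hfun ⟨m, hm⟩]
      simp
    have h1 := AscentWord.unique_val π hπ w hwπ
    have h2 := AscentWord.unique_val σ hσ w hwσ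
    apply Subtype.ext
    apply Equiv.ext
    intro i
    exact Fin.ext ((h1 i).trans (h2 i).symm)
  · intro wv
    set w : ℕ → Bool := fun m => if hm : m < n then wv ⟨m, hm⟩ else false with hwdef
    refine ⟨⟨AscentWord.P n w, AscentWord.P_avoids n w⟩, ?_⟩
    funext i
    simp only
    rw [AscentWord.P_word n w i]
    simp [hwdef, i.isLt]
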